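/- Let ν be the finest locally convex vector topology on ℝ^(ℕ) in which e_n → 0. Then for every ν-neighborhood U of 0, every t ∈ ℕ, and every a > 0, there exists q ∈ ℕ such that every vector v = λ₁ a e_{m₁} + ⋯ + λ_t a e_{m_t} with q < m₁ < ⋯ < m_t and λ₁,…,λ_t ∈ [-1,1] belongs to U. -/

import Mathlib

open Filter Topology

/-- In a topological additive group, any neighborhood of `0` admits a neighborhood `V` of `0`
such that any sum of `t` elements of `V` lies in `U`. -/
lemma aux_sum_nhds {E : Type*} [AddCommGroup E] [TopologicalSpace E] [IsTopologicalAddGroup E]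
    (t : ℕ) {U : Set E} (hU : U ∈ 𝓝 (0 : E)) :
    ∃ V ∈ 𝓝 (0 : E), ∀ f : Fin t → E, (∀ i, f i ∈ V) → ∑ i, f i ∈ U := by
  induction t generalizing U with
  | zero => exact ⟨U, hU, fun f _ => by simpa using mem_of_mem_nhds hU⟩
  | succ n ih =>
    obtain ⟨V, hV, hadd⟩ := exists_nhds_zero_half hU
    obtain ⟨W, hW, hWsum⟩ := ih hV
    refine ⟨V ∩ W, Filter.inter_mem hV hW, fun f hf => ?_⟩
    rw [Fin.sum_univ_succ]
    exact hadd _ (hf 0).1 _ (hWsum (fun i => f i.succ) fun i => (hf i.succ).2)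

/-- `t` is a locally convex vector topology on `ℝ^(ℕ)` (the finitely supported real
sequences). -/
def IsLCVectorTopology (t : TopologicalSpace (ℕ →₀ ℝ)) : Prop :=
  @IsTopologicalAddGroup (ℕ →₀ ℝ) t _ ∧ @ContinuousSMul ℝ (ℕ →₀ ℝ) _ _ t ∧
    @LocallyConvexSpace ℝ (ℕ →₀ ℝ) _ _ _ _ t

/-- `ν` is the finest locally convex vector topology on `ℝ^(ℕ)` in which the standard
basis vectors `e_n = single n 1` converge to `0` (this is the topology of the Graev
free locally convex space `L_G(s)`). -/
def IsNuTopology (ν : TopologicalSpace (ℕ →₀ ℝ)) : Prop :=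
  IsLCVectorTopology ν ∧
  Tendsto (fun n : ℕ => Finsupp.single n (1 : ℝ)) atTop (@nhds (ℕ →₀ ℝ) ν 0) ∧
  ∀ t : TopologicalSpace (ℕ →₀ ℝ), IsLCVectorTopology t →
    Tendsto (fun n : ℕ => Finsupp.single n (1 : ℝ)) atTop (@nhds (ℕ →₀ ℝ) t 0) → ν ≤ t

/-- for every `ν`-neighborhood `U` of `0`, every `t ∈ ℕ` and every `a > 0`,
there is `q ∈ ℕ` such that every vector `v = λ₁ a e_{m₁} + ⋯ + λ_t a e_{m_t}` with
`q < m₁ < ⋯ < m_t` and `λᵢ ∈ [-1, 1]` belongs to `U`. -/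
theorem stmt10 (ν : TopologicalSpace (ℕ →₀ ℝ)) (hν : IsNuTopology ν)
    (U : Set (ℕ →₀ ℝ)) (hU : U ∈ @nhds (ℕ →₀ ℝ) ν 0) (t : ℕ) (a : ℝ) (ha : 0 < a) :
    ∃ q : ℕ, ∀ m : Fin t → ℕ, ∀ lam : Fin t → ℝ, StrictMono m → (∀ i, q < m i) →
      (∀ i, lam i ∈ Set.Icc (-1 : ℝ) 1) →
      (∑ i : Fin t, Finsupp.single (m i) (lam i * a)) ∈ U := by
  classical
  letI := ν
  obtain ⟨⟨hg, hsmul, hlc⟩, htend, -⟩ := hν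
  haveI := hg; haveI := hsmul; haveI := hlc
  -- a neighborhood V of 0 such that sums of t elements of V lie in U
  obtain ⟨V, hV, hVsum⟩ := aux_sum_nhds t hU
  -- an absolutely convex neighborhood S of 0 contained in V
  obtain ⟨S, ⟨hS, hSbal, hSconv⟩, hSV⟩ :=
    (nhds_hasBasis_absConvex ℝ (ℕ →₀ ℝ)).mem_iff.mp hV
  -- a • e_n ∈ S eventually
  have htend' : Tendsto (fun n : ℕ => Finsupp.single n (a : ℝ)) atTop (𝓝 0) := by
    have := htend.const_smul a
    simpa [Finsupp.smul_single] using this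
  obtain ⟨q, hq⟩ := (htend'.eventually_mem hS).exists_forall_of_atTop
  refine ⟨q, fun m lam _ hm hlam => ?_⟩
  refine hVsum _ fun i => hSV ?_
  have h1 : Finsupp.single (m i) a ∈ S := hq _ (le_of_lt (hm i))
  have h2 : ‖lam i‖ ≤ 1 := by
    rw [Real.norm_eq_abs, abs_le]; exact ⟨(hlam i).1, (hlam i).2⟩
  have := hSbal.smul_mem h2 h1
  simpa [Finsupp.smul_single, smul_eq_mul] using this
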